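/- Let N ∈ ℕ (N ≥ 0) and let s ∈ ℂ with Re s > N + 2. Then ∑_{n=1}^∞ ( ∑_{k=1}^{n−1} k^N ) · n^{−s} = (1/(N+1))·ζ(s−N−1) − ∑_{k=0}^{N} binom(N,k)·ζ(s−N+k)·ζ(−k) + ζ(s)·ζ(−N) − ζ(s−N), where ζ is the Riemann zeta function (the series on the left converges absolutely, and every argument s−N−1, s−N+k, s, s−N of ζ on the right has real part > 1 or is a nonpositive integer, so no poles occur). (Lemma 5.1, formula (5.2), expressing the Euler–Zagier double zeta value ζ_2(−N, s) in terms of Riemann zeta values.) -/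

import Mathlib

open Complex Finset

lemma aux_summable {s : ℂ} (hs : 1 < s.re) :
    Summable (fun n : ℕ => ((n : ℂ) + 1) ^ (-s)) := by
  have h1 : Summable (fun n : ℕ => 1 / ((n : ℂ)) ^ s) :=
    Complex.summable_one_div_nat_cpow.mpr hs
  have h2 := (summable_nat_add_iff 1).mpr h1
  simpa [cpow_neg, one_div] using h2

lemma aux_zeta {s : ℂ} (hs : 1 < s.re) :
    ∑' n : ℕ, ((n : ℂ) + 1) ^ (-s) = riemannZeta s := by
  rw [zeta_eq_tsum_one_div_nat_add_one_cpow hs]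
  exact tsum_congr fun n => by rw [cpow_neg, one_div]

lemma aux_pt (n c : ℕ) (s : ℂ) :
    ((n : ℂ) + 1) ^ c * ((n : ℂ) + 1) ^ (-s) = ((n : ℂ) + 1) ^ (-(s - (c : ℂ))) := by
  have hne : (n : ℂ) + 1 ≠ 0 := by exact Nat.cast_add_one_ne_zero n
  rw [← cpow_natCast, ← cpow_add _ _ hne, neg_sub, sub_eq_add_neg]

lemma inner_eq (N n : ℕ) :
    (∑ k ∈ Finset.range n, ((k : ℂ) + 1) ^ N) =
      (∑ i ∈ Finset.range (N + 1),
        (bernoulli i : ℂ) * ((N + 1).choose i) * ((n : ℂ) + 1) ^ (N + 1 - i) / (N + 1))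
      - (0 : ℂ) ^ N := by
  have hQ : (∑ k ∈ Finset.range n, ((k : ℚ) + 1) ^ N) =
      (∑ i ∈ Finset.range (N + 1),
        (bernoulli i : ℚ) * ((N + 1).choose i) * ((n : ℚ) + 1) ^ (N + 1 - i) / (N + 1))
      - (0 : ℚ) ^ N := by
    have h1 := _root_.sum_range_pow (n + 1) N
    rw [Finset.sum_range_succ'] at h1
    push_cast at h1 ⊢
    linarith [h1]
  have := congrArg (fun q : ℚ => (q : ℂ)) hQ
  push_cast at this
  exact this

/-- Lemma 5.1, formula (5.2): for `N ∈ ℕ` and `Re s > N + 2`, the Euler–Zagier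
double zeta value `ζ₂(-N, s) = ∑_{n ≥ 1} (∑_{k=1}^{n-1} k^N) n^{-s}` equals
`(1/(N+1)) ζ(s-N-1) - ∑_{k=0}^N C(N,k) ζ(s-N+k) ζ(-k) + ζ(s) ζ(-N) - ζ(s-N)`. -/
theorem zeta2_neg_nat_eq (N : ℕ) (s : ℂ) (hs : (N : ℝ) + 2 < s.re) :
    (∑' n : ℕ, (∑ k ∈ Finset.range n, ((k : ℂ) + 1) ^ N) * ((n : ℂ) + 1) ^ (-s))
      = (1 / ((N : ℂ) + 1)) * riemannZeta (s - N - 1)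
        - ∑ k ∈ Finset.range (N + 1),
            (N.choose k : ℂ) * riemannZeta (s - N + k) * riemannZeta (-(k : ℂ))
        + riemannZeta s * riemannZeta (-(N : ℂ))
        - riemannZeta (s - N) := by
  have hN0 : (0 : ℝ) ≤ (N : ℝ) := Nat.cast_nonneg N
  have hs1 : 1 < s.re := by linarith
  have hpos : ∀ i ∈ Finset.range (N + 1), 1 < (s - ((N + 1 - i : ℕ) : ℂ)).re := by
    intro i _
    have hle : ((N + 1 - i : ℕ) : ℝ) ≤ (N : ℝ) + 1 := by
      have : (N + 1 - i : ℕ) ≤ N + 1 := Nat.sub_le _ _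
      exact_mod_cast this
    rw [sub_re]
    simp only [natCast_re]
    linarith
  -- pointwise rewrite of the summand
  have key : ∀ n : ℕ,
      (∑ k ∈ Finset.range n, ((k : ℂ) + 1) ^ N) * ((n : ℂ) + 1) ^ (-s)
        = (∑ i ∈ Finset.range (N + 1),
            ((bernoulli i : ℂ) * ((N + 1).choose i) / (N + 1))
              * ((n : ℂ) + 1) ^ (-(s - ((N + 1 - i : ℕ) : ℂ))))
          - (0 : ℂ) ^ N * ((n : ℂ) + 1) ^ (-s) := by
    intro n
    rw [inner_eq N n, sub_mul, Finset.sum_mul]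
    congr 1
    refine Finset.sum_congr rfl fun i _ => ?_
    rw [← aux_pt n (N + 1 - i) s]
    ring
  rw [tsum_congr key]
  have S1 : ∀ i ∈ Finset.range (N + 1),
      Summable (fun n : ℕ => ((bernoulli i : ℂ) * ((N + 1).choose i) / (N + 1))
        * ((n : ℂ) + 1) ^ (-(s - ((N + 1 - i : ℕ) : ℂ)))) :=
    fun i hi => (aux_summable (by simpa using hpos i hi)).mul_left _
  have S2 : Summable (fun n : ℕ => ∑ i ∈ Finset.range (N + 1),
      ((bernoulli i : ℂ) * ((N + 1).choose i) / (N + 1))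
        * ((n : ℂ) + 1) ^ (-(s - ((N + 1 - i : ℕ) : ℂ)))) :=
    summable_sum S1
  have S3 : Summable (fun n : ℕ => (0 : ℂ) ^ N * ((n : ℂ) + 1) ^ (-s)) :=
    (aux_summable hs1).mul_left _
  rw [Summable.tsum_sub S2 S3, Summable.tsum_finsetSum S1, tsum_mul_left, aux_zeta hs1]
  have hzi : ∀ i ∈ Finset.range (N + 1),
      (∑' n : ℕ, ((bernoulli i : ℂ) * ((N + 1).choose i) / (N + 1))
        * ((n : ℂ) + 1) ^ (-(s - ((N + 1 - i : ℕ) : ℂ))))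
      = ((bernoulli i : ℂ) * ((N + 1).choose i) / (N + 1))
          * riemannZeta (s - ((N + 1 - i : ℕ) : ℂ)) := by
    intro i hi
    rw [tsum_mul_left, aux_zeta (hpos i hi)]
  rw [Finset.sum_congr rfl hzi]
  -- now purely algebraic
  rw [Finset.sum_range_succ'  (fun i => ((bernoulli i : ℂ) * ((N + 1).choose i) / (N + 1))
          * riemannZeta (s - ((N + 1 - i : ℕ) : ℂ)))]
  rw [Finset.sum_range_succ (fun k => (N.choose k : ℂ) * riemannZeta (s - N + k)
          * riemannZeta (-(k : ℂ)))]
  have h0 : ((bernoulli 0 : ℂ) * ((N + 1).choose 0) / (N + 1))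
      * riemannZeta (s - ((N + 1 - 0 : ℕ) : ℂ))
      = (1 / ((N : ℂ) + 1)) * riemannZeta (s - N - 1) := by
    have : s - ((N + 1 - 0 : ℕ) : ℂ) = s - N - 1 := by push_cast; ring
    rw [this]
    simp [bernoulli_zero]
  have hNN : (N.choose N : ℂ) * riemannZeta (s - N + N) * riemannZeta (-(N : ℂ))
      = riemannZeta s * riemannZeta (-(N : ℂ)) := by
    rw [Nat.choose_self]
    rw [show s - (N : ℂ) + N = s by ring]
    ring
  rw [h0, hNN]
  have hsum : ∑ k ∈ Finset.range N,
      ((bernoulli (k + 1) : ℂ) * ((N + 1).choose (k + 1)) / (N + 1))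
        * riemannZeta (s - ((N + 1 - (k + 1) : ℕ) : ℂ))
      = - ∑ k ∈ Finset.range N,
          (N.choose k : ℂ) * riemannZeta (s - N + k) * riemannZeta (-(k : ℂ))
        - (if N = 0 then 0 else riemannZeta (s - N)) := by
    have hterm : ∀ k ∈ Finset.range N,
        ((bernoulli (k + 1) : ℂ) * ((N + 1).choose (k + 1)) / (N + 1))
          * riemannZeta (s - ((N + 1 - (k + 1) : ℕ) : ℂ))
        = (if k = 0 then -riemannZeta (s - N) else 0)
          - (N.choose k : ℂ) * riemannZeta (s - N + k) * riemannZeta (-(k : ℂ)) := by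
      intro k hk
      have hkN : k ≤ N := le_of_lt (Finset.mem_range.mp hk)
      have hc : s - ((N + 1 - (k + 1) : ℕ) : ℂ) = s - N + k := by
        rw [Nat.succ_sub_succ, Nat.cast_sub hkN]; ring
      rw [hc, riemannZeta_neg_nat_eq_bernoulli' k]
      have hN1 : ((N : ℂ) + 1) ≠ 0 := Nat.cast_add_one_ne_zero N
      have hk1 : ((k : ℂ) + 1) ≠ 0 := Nat.cast_add_one_ne_zero k
      rcases eq_or_ne k 0 with rfl | hk0
      · rw [if_pos rfl]
        simp only [zero_add, Nat.choose_one_right, Nat.choose_zero_right, bernoulli_one, Nat.cast_zero,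
          add_zero, Nat.cast_one, bernoulli'_one]
        push_cast
        field_simp
        ring
      · rw [if_neg hk0, bernoulli_eq_bernoulli'_of_ne_one (by simpa using hk0)]
        have hch : ((N : ℂ) + 1) * (N.choose k) = ((N + 1).choose (k + 1)) * ((k : ℂ) + 1) := by
          exact_mod_cast congrArg (Nat.cast : ℕ → ℂ) (Nat.add_one_mul_choose_eq N k)
        field_simp
        linear_combination (-1 : ℂ) * (bernoulli' (k + 1) : ℂ) * riemannZeta (s - ↑N + ↑k) * hch
    rw [Finset.sum_congr rfl hterm, Finset.sum_sub_distrib,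
      Finset.sum_ite_eq' (Finset.range N) 0 (fun _ => -riemannZeta (s - N))]
    rcases eq_or_ne N 0 with rfl | hN0'
    · simp
    · rw [if_neg hN0', if_pos (Finset.mem_range.mpr (Nat.pos_iff_ne_zero.mpr hN0'))]
      ring
  rw [hsum]
  rcases Nat.eq_zero_or_pos N with h | h
  · subst h
    simp
  · have : (0 : ℂ) ^ N = 0 := by
      exact zero_pow (Nat.pos_iff_ne_zero.mp h)
    rw [this, if_neg h.ne']
    ring
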